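/- Let A be an associative unital algebra over a field k of characteristic zero, and let e, f, h ∈ A satisfy [h,e] = e, [h,f] = −f, [e,f] = 2h, with e invertible in A. Let Δ = h² + (ef + fe)/2 be the Casimir element, let P ∈ k[X] be a polynomial, and set f' = f + e^{-1}·P(Δ), where P(Δ) is the evaluation of P at Δ. Then the triple (e, f', h) satisfies the same sl(2) relations: [h,e] = e, [h,f'] = −f', and [e,f'] = 2h. -/

import Mathlib

lemma commute_aeval {k A : Type*} [CommSemiring k] [Semiring A] [Algebra k A]
    {x y : A} (h : Commute x y) (P : Polynomial k) :
    Commute x (Polynomial.aeval y P) := by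
  induction P using Polynomial.induction_on with
  | C a => simpa [Commute, SemiconjBy] using (Algebra.commutes a x).symm
  | add p q hp hq => simpa [map_add] using hp.add_right hq
  | monomial n a hp => simpa [pow_succ, mul_assoc] using hp.mul_right h

theorem stmt_8 {k : Type*} [Field k] [CharZero k]
    {A : Type*} [Ring A] [Algebra k A]
    (e f h : A)
    (he : h * e - e * h = e)
    (hf : h * f - f * h = -f)
    (hef : e * f - f * e = 2 * h)
    (ei : A) (hei : e * ei = 1) (hei' : ei * e = 1)
    (Δ : A) (hΔ : Δ = h ^ 2 + (2⁻¹ : k) • (e * f + f * e))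
    (P : Polynomial k)
    (f' : A) (hf' : f' = f + ei * Polynomial.aeval Δ P) :
    h * e - e * h = e ∧ h * f' - f' * h = -f' ∧ e * f' - f' * e = 2 * h := by
  have he1 : h * e = e * h + e := by rw [sub_eq_iff_eq_add.mp he]; abel
  have hf1 : h * f = f * h - f := by rw [sub_eq_iff_eq_add.mp hf]; abel
  have hef1 : e * f = f * e + 2 * h := by rw [sub_eq_iff_eq_add.mp hef]; abel
  have heR : ∀ x : A, h * (e * x) = e * (h * x) + e * x := fun x => by
    rw [← mul_assoc, he1, add_mul, mul_assoc]
  have hfR : ∀ x : A, h * (f * x) = f * (h * x) - f * x := fun x => by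
    rw [← mul_assoc, hf1, sub_mul, mul_assoc]
  have hefR : ∀ x : A, e * (f * x) = f * (e * x) + 2 * (h * x) := fun x => by
    rw [← mul_assoc, hef1, add_mul, mul_assoc, mul_assoc]
  have hsq_e : h ^ 2 * e - e * h ^ 2 = 2 * (e * h) + e := by
    rw [pow_two]
    simp only [mul_add, add_mul, mul_sub, sub_mul, mul_assoc, he1, heR, hf1, hfR, hef1, hefR]
    noncomm_ring
  have hu_e : (e * f + f * e) * e - e * (e * f + f * e) = -(2 * (2 * (e * h) + e)) := by
    simp only [mul_add, add_mul, mul_sub, sub_mul, mul_assoc, he1, heR, hf1, hfR, hef1, hefR]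
    noncomm_ring
  have hu_h : (e * f + f * e) * h - h * (e * f + f * e) = 0 := by
    simp only [mul_add, add_mul, mul_sub, sub_mul, mul_assoc, he1, heR, hf1, hfR, hef1, hefR]
    noncomm_ring
  have halfneg : ∀ y : A, (2⁻¹ : k) • (-(2 * y)) = -y := fun y => by
    have h2 : (2 : A) * y = (2 : k) • y := by
      rw [two_smul, two_mul]
    rw [h2, smul_neg, smul_smul]
    norm_num
  have hΔe : Commute e Δ := by
    have expand : Δ * e - e * Δ =
        (h ^ 2 * e - e * h ^ 2) + (2⁻¹ : k) • ((e * f + f * e) * e - e * (e * f + f * e)) := by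
      rw [hΔ, add_mul, mul_add, smul_mul_assoc, mul_smul_comm, smul_sub]
      abel
    have : Δ * e - e * Δ = 0 := by
      rw [expand, hsq_e, hu_e, halfneg]
      abel
    exact (sub_eq_zero.mp this).symm
  have hΔh : Commute h Δ := by
    have expand : Δ * h - h * Δ =
        (h ^ 2 * h - h * h ^ 2) + (2⁻¹ : k) • ((e * f + f * e) * h - h * (e * f + f * e)) := by
      rw [hΔ, add_mul, mul_add, smul_mul_assoc, mul_smul_comm, smul_sub]
      abel
    have hcube : h ^ 2 * h - h * h ^ 2 = 0 := by noncomm_ring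
    have : Δ * h - h * Δ = 0 := by
      rw [expand, hcube, hu_h, smul_zero, add_zero]
    exact (sub_eq_zero.mp this).symm
  have hPe : Commute e (Polynomial.aeval Δ P) := commute_aeval hΔe P
  have hPh : Commute h (Polynomial.aeval Δ P) := commute_aeval hΔh P
  set Q := Polynomial.aeval Δ P with hQ
  have heih : h * ei - ei * h = -ei := by
    have key : ei * (h * e - e * h) * ei = ei * e * ei := by rw [he]
    have expand : ei * (h * e - e * h) * ei = ei * h * (e * ei) - ei * e * (h * ei) := by
      noncomm_ring
    rw [expand, hei, hei'] at key
    simp only [mul_one, one_mul] at key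
    simpa [neg_sub] using congrArg Neg.neg key
  refine ⟨he, ?_, ?_⟩
  · rw [hf']
    have h1 : h * (ei * Q) = (h * ei) * Q := by rw [mul_assoc]
    have h2 : (ei * Q) * h = ei * (h * Q) := by rw [mul_assoc, ← hPh.eq]
    have h3 : h * ei = ei * h - ei := by
      rw [sub_eq_iff_eq_add.mp heih]; abel
    rw [mul_add, add_mul, h1, h2, h3, hf1]
    noncomm_ring
  · rw [hf']
    have h1 : e * (ei * Q) = Q := by rw [← mul_assoc, hei, one_mul]
    have h2 : (ei * Q) * e = Q := by rw [mul_assoc, ← hPe.eq, ← mul_assoc, hei', one_mul]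
    rw [mul_add, add_mul, h1, h2, hef1]
    noncomm_ring
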